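/- Let (X,d) be a δ-hyperbolic metric space. For every Q ≥ 1 and C ≥ 0 there exists a constant D = D(δ,Q,C) such that: (1) if y and z belong to a shadow S_o(x,R), then any (Q,C)-quasigeodesic segment between y and z is contained in S_o(x,R+D); (2) if y and z do not belong to S_o(x,R), then any (Q,C)-quasigeodesic segment between y and z is disjoint from S_o(x,R−D). -/

import Mathlib

/-!
STATEMENT 8: Weak convexity of shadows in δ-hyperbolic metric spaces
(general, not necessarily geodesic or proper).

For every `Q ≥ 1`, `C ≥ 0` there is a constant `D = D(δ, Q, C)` such that:
(1) if `y, z` belong to the shadow `S_o(x, R)`, then any `(Q,C)`-quasigeodesic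
    segment between `y` and `z` is contained in `S_o(x, R + D)`;
(2) if `y, z` do not belong to `S_o(x, R)`, then any `(Q,C)`-quasigeodesic
    segment between `y` and `z` is disjoint from `S_o(x, R - D)`.
-/

open Filter Set

namespace Stmt8

variable {X : Type*} [MetricSpace X]

/-- The Gromov product `(x|y)_o = (d(x,o) + d(y,o) - d(x,y)) / 2`. -/
noncomputable def gp (o x y : X) : ℝ := (dist x o + dist y o - dist x y) / 2

/-- `X` is `δ`-hyperbolic in the sense of the four-point Gromov product inequality. -/
def IsGromovHyperbolicWith (X : Type*) [MetricSpace X] (δ : ℝ) : Prop :=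
  ∀ o x y z : X, min (gp o x z) (gp o z y) - δ ≤ gp o x y

/-- The `R`-shadow of `x` seen from `o`: `S_o(x,R) = {y | (y|o)_x ≤ R}`. -/
def shadow (o x : X) (R : ℝ) : Set X := {y | gp x y o ≤ R}

/-- `γ : [a,b] → X` is a `(Q,C)`-quasigeodesic segment. -/
def IsQuasiGeodesicOn (Q C : ℝ) (γ : ℝ → X) (a b : ℝ) : Prop :=
  ∀ s ∈ Icc a b, ∀ t ∈ Icc a b,
    Q⁻¹ * |s - t| - C ≤ dist (γ s) (γ t) ∧ dist (γ s) (γ t) ≤ Q * |s - t| + C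

lemma gp_nonneg (o x y : X) : 0 ≤ gp o x y := by
  have := dist_triangle x o y
  have := dist_comm o y
  unfold gp; rw [dist_comm y o]; linarith [dist_triangle x o y]

lemma gp_comm (o x y : X) : gp o x y = gp o y x := by
  unfold gp; rw [dist_comm x y]; ring

lemma gp_le_left (o x y : X) : gp o x y ≤ dist x o := by
  unfold gp; linarith [dist_triangle y x o, dist_comm y x]

lemma gp_add (w x a : X) : gp w a x + gp x a w = dist x w := by
  unfold gp; rw [dist_comm w x]; ring

lemma gp_base (x w p q : X) : gp x p q ≤ gp w p q + dist x w := by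
  unfold gp
  have h1 := dist_triangle p w x
  have h2 := dist_triangle q w x
  rw [dist_comm w x] at h1 h2
  linarith

lemma dist_eq_gp (w u v : X) : dist u v = dist u w + dist v w - 2 * gp w u v := by
  unfold gp; ring

lemma chain_lemma {δ : ℝ} (hδ : 0 ≤ δ) (hX : IsGromovHyperbolicWith X δ) (w : X) :
    ∀ (k : ℕ) (y : ℕ → X) (n : ℕ) (m : ℝ), 0 < n → n ≤ 2 ^ k →
      (∀ i < n, m ≤ gp w (y i) (y (i + 1))) → m - δ * k ≤ gp w (y 0) (y n) := by
  intro k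
  induction k with
  | zero =>
    intro y n m hn hn2 hprod
    interval_cases n
    · simpa using hprod 0 (by norm_num)
  | succ k ih =>
    intro y n m hn hn2 hprod
    by_cases h : n ≤ 2 ^ k
    · have := ih y n m hn h hprod
      have : δ * k ≤ δ * (k + 1 : ℕ) := by
        push_cast; nlinarith
      linarith [ih y n m hn h hprod]
    · push_neg at h
      set n₁ := n / 2 with hn₁
      have h2k : (0:ℕ) < 2 ^ k := Nat.pow_pos (by norm_num)
      have hn2' : n ≤ 2 * 2 ^ k := by rw [pow_succ] at hn2; omega
      have hA : 0 < n₁ := by omega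
      have hB : n₁ ≤ 2 ^ k := by omega
      have hC : 0 < n - n₁ := by omega
      have hD : n - n₁ ≤ 2 ^ k := by omega
      have ih1 := ih y n₁ m hA hB (fun i hi => hprod i (by omega))
      have ih2 := ih (fun i => y (n₁ + i)) (n - n₁) m hC hD
        (fun i hi => by
          have := hprod (n₁ + i) (by omega)
          simpa [Nat.add_assoc] using this)
      simp only [Nat.add_zero] at ih2
      have hnn : n₁ + (n - n₁) = n := by omega
      rw [hnn] at ih2
      have hhyp := hX w (y 0) (y n) (y n₁)
      have : m - δ * k - δ ≤ gp w (y 0) (y n) := by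
        have hmin : m - δ * k ≤ min (gp w (y 0) (y n₁)) (gp w (y n₁) (y n)) :=
          le_min ih1 ih2
        linarith
      push_cast
      linarith

lemma qg_mono {Q C : ℝ} {γ : ℝ → X} {a b a' b' : ℝ}
    (hγ : IsQuasiGeodesicOn Q C γ a b) (h : Icc a' b' ⊆ Icc a b) :
    IsQuasiGeodesicOn Q C γ a' b' :=
  fun s hs t ht => hγ s (h hs) t (h ht)

lemma qg_rev {Q C : ℝ} {γ : ℝ → X} {a b : ℝ}
    (hγ : IsQuasiGeodesicOn Q C γ a b) :
    IsQuasiGeodesicOn Q C (fun s => γ (a + b - s)) a b := by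
  intro s hs t ht
  have h1 : a + b - s ∈ Icc a b := by
    constructor <;> [linarith [hs.2]; linarith [hs.1]]
  have h2 : a + b - t ∈ Icc a b := by
    constructor <;> [linarith [ht.2]; linarith [ht.1]]
  have := hγ (a + b - s) h1 (a + b - t) h2
  have habs : |a + b - s - (a + b - t)| = |s - t| := by
    rw [show a + b - s - (a + b - t) = -(s - t) by ring, abs_neg]
  rw [habs] at this
  exact this

lemma side {δ Q C : ℝ} (hδ : 0 ≤ δ) (hX : IsGromovHyperbolicWith X δ)
    (hQ : 1 ≤ Q) (hC : 0 ≤ C) {γ : ℝ → X} {a b : ℝ}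
    (hγ : IsQuasiGeodesicOn Q C γ a b) {t : ℝ} (ht : t ∈ Icc a b) (hat : a < t)
    (k : ℕ) (hk : Q * (t - a) ≤ (C + 1) * 2 ^ k) {r : ℝ} (hr : 0 < r)
    (hre : r ≤ dist (γ a) (γ t)) :
    ∃ s ∈ Icc a t, r - (2 * C + 1) ≤ dist (γ s) (γ t) ∧ dist (γ s) (γ t) < r ∧
      r - (2 * C + 1) - δ * k ≤ gp (γ t) (γ a) (γ s) := by
  classical
  have hQ0 : (0:ℝ) < Q := lt_of_lt_of_le one_pos hQ
  have hC1 : (0:ℝ) < C + 1 := by linarith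
  set n : ℕ := ⌈Q * (t - a) / (C + 1)⌉₊ with hn_def
  have hpos : 0 < Q * (t - a) / (C + 1) :=
    div_pos (mul_pos hQ0 (by linarith)) hC1
  have hn : 0 < n := Nat.ceil_pos.mpr hpos
  have hnR : (0:ℝ) < (n:ℝ) := by exact_mod_cast hn
  set h : ℝ := (t - a) / n with hh_def
  have hh0 : 0 ≤ h := by
    apply div_nonneg (by linarith) (le_of_lt hnR)
  have hnh : (n:ℝ) * h = t - a := by
    rw [hh_def]; field_simp
  have hQh : Q * h ≤ C + 1 := by
    have h1 : Q * (t - a) / (C + 1) ≤ (n:ℝ) := Nat.le_ceil _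
    rw [div_le_iff₀ hC1] at h1
    rw [hh_def, ← mul_div_assoc]
    rw [div_le_iff₀ hnR]
    calc Q * (t - a) ≤ (n:ℝ) * (C + 1) := by linarith
    _ = (C+1) * n := by ring
  have hn2k : n ≤ 2 ^ k := by
    rw [hn_def]
    apply Nat.ceil_le.mpr
    rw [div_le_iff₀ hC1]
    calc Q * (t - a) ≤ (C + 1) * 2 ^ k := hk
    _ = (2:ℝ) ^ k * (C+1) := by ring
    _ = ((2 ^ k : ℕ) : ℝ) * (C + 1) := by push_cast; ring
  -- grid points
  set pt : ℕ → ℝ := fun i => a + i * h with hpt_def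
  have hmem : ∀ i ≤ n, pt i ∈ Icc a t := by
    intro i hi
    constructor
    · simp only [hpt_def]; nlinarith [Nat.cast_nonneg (α := ℝ) i]
    · simp only [hpt_def]
      have : (i:ℝ) * h ≤ (n:ℝ) * h := by
        apply mul_le_mul_of_nonneg_right _ hh0
        exact_mod_cast hi
      linarith [hnh]
  have hmemb : ∀ i ≤ n, pt i ∈ Icc a b := fun i hi =>
    ⟨(hmem i hi).1, le_trans (hmem i hi).2 ht.2⟩
  have hstep : ∀ i < n, dist (γ (pt i)) (γ (pt (i+1))) ≤ 2 * C + 1 := by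
    intro i hi
    have h1 := (hγ (pt i) (hmemb i (le_of_lt hi)) (pt (i+1)) (hmemb (i+1) hi)).2
    have habs : |pt i - pt (i+1)| = h := by
      simp only [hpt_def]
      rw [show a + (i:ℝ) * h - (a + (↑(i+1)) * h) = -h by push_cast; ring, abs_neg,
        abs_of_nonneg hh0]
    rw [habs] at h1
    linarith
  have hptn : pt n = t := by simp only [hpt_def]; linarith [hnh]
  have hpt0 : pt 0 = a := by simp [hpt_def]
  -- crossing index
  have hex : ∃ i, i ≤ n ∧ dist (γ (pt i)) (γ t) < r := ⟨n, le_refl n, by rw [hptn]; simpa⟩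
  have hspec := Nat.find_spec hex
  set i₁ := Nat.find hex with hi₁_def
  obtain ⟨hi₁n, hi₁lt⟩ := hspec
  have hbefore : ∀ j < i₁, r ≤ dist (γ (pt j)) (γ t) := by
    intro j hj
    have := Nat.find_min hex hj
    push_neg at this
    by_contra hcon
    push_neg at hcon
    exact absurd (this (by omega)) (by push_neg; exact hcon)
  have hi₁0 : 0 < i₁ := by
    rcases Nat.eq_zero_or_pos i₁ with h0 | h0
    · exfalso
      have := hi₁lt
      rw [h0, hpt0] at this
      linarith
    · exact h0
  -- lower bound for dist at i₁
  have hlow : r - (2 * C + 1) ≤ dist (γ (pt i₁)) (γ t) := by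
    have h1 := hbefore (i₁ - 1) (by omega)
    have h2 := hstep (i₁ - 1) (by omega)
    have h3 : i₁ - 1 + 1 = i₁ := by omega
    rw [h3] at h2
    have h4 := dist_triangle (γ (pt (i₁ - 1))) (γ (pt i₁)) (γ t)
    linarith
  -- chain products
  have hprod : ∀ i < i₁, r - (2 * C + 1) ≤ gp (γ t) (γ (pt i)) (γ (pt (i+1))) := by
    intro i hi
    have h1 := hbefore i hi
    have h2 : r - (2 * C + 1) ≤ dist (γ (pt (i+1))) (γ t) := by
      rcases Nat.lt_or_ge (i+1) i₁ with hlt | hge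
      · linarith [hbefore (i+1) hlt]
      · have : i + 1 = i₁ := by omega
        rw [this]; exact hlow
    have h3 := hstep i (by omega)
    unfold gp
    linarith
  have hchain := chain_lemma hδ hX (γ t) k (fun i => γ (pt i)) i₁ (r - (2*C+1))
    hi₁0 (le_trans hi₁n hn2k) hprod
  refine ⟨pt i₁, hmem i₁ hi₁n, hlow, hi₁lt, ?_⟩
  simpa only [hpt0] using hchain

lemma window {δ Q C : ℝ} (hδ : 0 ≤ δ) (hX : IsGromovHyperbolicWith X δ)
    (hQ : 1 ≤ Q) (hC : 0 ≤ C) {γ : ℝ → X} {a b : ℝ} (hab : a ≤ b)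
    (hγ : IsQuasiGeodesicOn Q C γ a b) {t : ℝ} (ht : t ∈ Icc a b) (k : ℕ)
    (hk : Q * (b - a) ≤ (C + 1) * 2 ^ k) :
    gp (γ t) (γ a) (γ b) ≤
      (2*C+1) + C + Q^2 * ((2*C+1) + δ*k + 2*δ + C/2) := by
  have hQ0 : (0:ℝ) < Q := lt_of_lt_of_le one_pos hQ
  have hδk : (0:ℝ) ≤ δ * k := mul_nonneg hδ (Nat.cast_nonneg k)
  by_contra hcon
  push_neg at hcon
  set w := γ t with hw
  set r := gp (γ t) (γ a) (γ b) with hr_def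
  have hr0 : 0 < r := by
    have hQ2 : (0:ℝ) ≤ Q^2 := sq_nonneg Q
    have hf : (0:ℝ) ≤ (2*C+1) + δ*k + 2*δ + C/2 := by linarith
    nlinarith
  have hat : a < t := by
    rcases lt_or_ge a t with h | h
    · exact h
    · exfalso
      have hta : t = a := le_antisymm h ht.1
      have : r ≤ dist (γ a) (γ t) := gp_le_left (γ t) (γ a) (γ b)
      rw [hta] at this
      simp at this
      linarith
  have htb : t < b := by
    rcases lt_or_ge t b with h | h
    · exact h
    · exfalso
      have htb' : t = b := le_antisymm ht.2 h
      have : r ≤ dist (γ b) (γ t) := by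
        rw [hr_def, gp_comm]; exact gp_le_left (γ t) (γ b) (γ a)
      rw [htb'] at this
      simp at this
      linarith
  have hreL : r ≤ dist (γ a) (γ t) := gp_le_left (γ t) (γ a) (γ b)
  have hreR : r ≤ dist (γ b) (γ t) := by
    rw [hr_def, gp_comm]; exact gp_le_left (γ t) (γ b) (γ a)
  -- left crossing point
  obtain ⟨s₁, hs₁mem, hd₁low, hd₁hi, hg₁⟩ :=
    side hδ hX hQ hC hγ ht hat k
      (by nlinarith [ht.2]) hr0 hreL
  -- right crossing point via reversal
  have hrev := qg_rev hγ
  have htrev : a + b - t ∈ Icc a b := ⟨by linarith [ht.2], by linarith [ht.1]⟩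
  have hatrev : a < a + b - t := by linarith
  have hkrev : Q * (a + b - t - a) ≤ (C + 1) * 2 ^ k := by
    have : a + b - t - a ≤ b - a := by linarith [ht.1]
    nlinarith
  have hger : γ (a + b - a) = γ b := by norm_num
  have hget : γ (a + b - (a + b - t)) = γ t := by norm_num
  obtain ⟨s', hs'mem, hd₂low', hd₂hi', hg₂'⟩ :=
    side (γ := fun s => γ (a + b - s)) hδ hX hQ hC hrev htrev hatrev k hkrev hr0
      (by simpa only [hger, hget] using hreR)
  simp only [hger, hget] at hd₂low' hd₂hi' hg₂'
  set s₂ : ℝ := a + b - s' with hs₂_def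
  have hs₂mem : s₂ ∈ Icc t b := ⟨by linarith [hs'mem.2], by linarith [hs'mem.1]⟩
  set u := γ s₁ with hu
  set v := γ s₂ with hv
  -- parameter bounds
  have hs₁b : s₁ ∈ Icc a b := ⟨hs₁mem.1, le_trans hs₁mem.2 ht.2⟩
  have hs₂b : s₂ ∈ Icc a b := ⟨le_trans ht.1 hs₂mem.1, hs₂mem.2⟩
  have hq₁ := (hγ s₁ hs₁b t ht).2
  have habs1 : |s₁ - t| = t - s₁ := by rw [abs_of_nonpos (by linarith [hs₁mem.2])]; ring
  rw [habs1] at hq₁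
  have hpar1 : r - (2*C+1) - C ≤ Q * (t - s₁) := by linarith
  have hq₂ := (hγ t ht s₂ hs₂b).2
  have habs2 : |t - s₂| = s₂ - t := by rw [abs_of_nonpos (by linarith [hs₂mem.1])]; ring
  rw [habs2] at hq₂
  have hpar2 : r - (2*C+1) - C ≤ Q * (s₂ - t) := by
    have : dist v w ≤ Q * (s₂ - t) + C := by
      rw [dist_comm]; exact hq₂
    linarith
  -- gromov product estimates
  have hg3 : r - (2*C+1) - δ*k - δ ≤ gp w (γ a) v := by
    have h1 := hX w (γ a) v (γ b)
    have h2 : min (gp w (γ a) (γ b)) (gp w (γ b) v) ≥ r - (2*C+1) - δ*k :=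
      le_min (by rw [hr_def]; linarith) hg₂'
    linarith
  have hg4 : r - (2*C+1) - δ*k - 2*δ ≤ gp w u v := by
    have h1 := hX w u v (γ a)
    have h2 : min (gp w u (γ a)) (gp w (γ a) v) ≥ r - (2*C+1) - δ*k - δ := by
      apply le_min _ (by linarith)
      rw [gp_comm]; linarith
    linarith
  -- distance between u and v
  have hduv : dist u v ≤ 2*(2*C+1) + 2*(δ*k) + 4*δ := by
    have := dist_eq_gp w u v
    linarith
  -- quasigeodesic lower bound
  have hlow := (hγ s₁ hs₁b s₂ hs₂b).1
  have habs3 : |s₁ - s₂| = s₂ - s₁ := by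
    rw [abs_of_nonpos (by linarith [hs₁mem.2, hs₂mem.1])]; ring
  rw [habs3] at hlow
  have hQne : Q ≠ 0 := ne_of_gt hQ0
  have hfin : s₂ - s₁ ≤ Q * (dist u v + C) := by
    have h1 : Q⁻¹ * (s₂ - s₁) ≤ dist u v + C := by linarith
    have h2 := mul_le_mul_of_nonneg_left h1 (le_of_lt hQ0)
    rw [← mul_assoc, mul_inv_cancel₀ hQne, one_mul] at h2
    exact h2
  -- combine
  have hQQ := mul_le_mul_of_nonneg_left hfin (le_of_lt hQ0)
  have h6 : Q * (Q * (dist u v + C)) = Q^2 * (dist u v + C) := by ring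
  rw [h6] at hQQ
  have h5 : Q^2 * (dist u v + C) ≤ Q^2 * (2*(2*C+1) + 2*(δ*k) + 4*δ + C) :=
    mul_le_mul_of_nonneg_left (by linarith) (sq_nonneg Q)
  have hsum : 2*(r - (2*C+1) - C) ≤ Q * (s₂ - s₁) := by
    have : Q * (s₂ - s₁) = Q * (t - s₁) + Q * (s₂ - t) := by ring
    linarith
  have hso : Q * (s₂ - s₁) ≤ Q^2 * (dist u v + C) := hQQ
  have hexp : Q^2 * (2*(2*C+1) + 2*(δ*k) + 4*δ + C) =
      2 * (Q^2 * ((2*C+1) + δ*k + 2*δ + C/2)) := by ring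
  linarith

lemma exists_nat_pow_ge (c₁ c₂ : ℝ) : ∃ k : ℕ, c₁ + c₂ * k ≤ 2 ^ k := by
  obtain ⟨j, hj⟩ := pow_unbounded_of_one_lt (max c₁ c₂) (one_lt_two (α := ℝ))
  have hc₁ : c₁ ≤ 2 ^ j := le_of_lt (lt_of_le_of_lt (le_max_left _ _) hj)
  have hc₂ : c₂ ≤ 2 ^ j := le_of_lt (lt_of_le_of_lt (le_max_right _ _) hj)
  have hj2 : (j:ℝ) + 1 ≤ 2 ^ j := by exact_mod_cast (Nat.lt_two_pow_self (n := j))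
  have hp : (0:ℝ) < 2 ^ j := by positivity
  refine ⟨2*j+1, ?_⟩
  have hcast : ((2*j+1 : ℕ) : ℝ) = 2*(j:ℝ)+1 := by push_cast; ring
  have hpow : (2:ℝ) ^ (2*j+1) = 2^j * 2^j * 2 := by
    rw [two_mul, pow_succ, pow_add]
  rw [hcast, hpow]
  have h1 : c₂ * (2*(j:ℝ)+1) ≤ 2^j * (2*(j:ℝ)+1) := by
    apply mul_le_mul_of_nonneg_right hc₂
    positivity
  nlinarith

lemma marchR {δ Q C : ℝ} (hδ : 0 ≤ δ) (hX : IsGromovHyperbolicWith X δ)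
    (hQ : 1 ≤ Q) (hC : 0 ≤ C) (k₀ : ℕ) (K₁ Λ : ℝ)
    (hK₁ : K₁ = (2*C+1) + C + Q^2 * ((2*C+1) + δ*k₀ + 2*δ + C/2))
    (hΛ : Λ = Q * (2*K₁ + 5*δ + C + 1))
    (hk₀ : Q * (2*Λ) ≤ (C+1) * 2 ^ k₀) :
    ∀ N : ℕ, ∀ γ : ℝ → X, ∀ a b : ℝ, a ≤ b → IsQuasiGeodesicOn Q C γ a b →
      ∀ t ∈ Icc a b, t - a ≤ Λ → b - t ≤ N * Λ →
      gp (γ t) (γ a) (γ b) ≤ K₁ + 2*δ := by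
  have hQ0 : (0:ℝ) < Q := lt_of_lt_of_le one_pos hQ
  have hδk : (0:ℝ) ≤ δ * k₀ := mul_nonneg hδ (Nat.cast_nonneg k₀)
  have hK₁0 : 0 ≤ K₁ := by
    have hQ2 : (0:ℝ) ≤ Q^2 := sq_nonneg Q
    have hf : (0:ℝ) ≤ (2*C+1) + δ*k₀ + 2*δ + C/2 := by linarith
    nlinarith
  have hΛ0 : 0 < Λ := by
    rw [hΛ]; apply mul_pos hQ0; linarith
  have hQΛ : Q⁻¹ * Λ = 2*K₁ + 5*δ + C + 1 := by
    rw [hΛ, ← mul_assoc, inv_mul_cancel₀ (ne_of_gt hQ0), one_mul]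
  intro N
  induction N with
  | zero =>
    intro γ a b hab hγ t ht h1 h2
    have htb : t = b := by
      simp only [Nat.cast_zero, zero_mul] at h2
      linarith [ht.2]
    rw [htb, gp_comm]
    have := gp_le_left (γ b) (γ b) (γ a)
    simp at this
    linarith
  | succ N ih =>
    intro γ a b hab hγ t ht h1 h2
    by_cases hb : b ≤ t + Λ
    · -- window case
      have hk : Q * (b - a) ≤ (C+1) * 2 ^ k₀ := by
        have : b - a ≤ 2*Λ := by linarith [ht.1, ht.2]
        nlinarith
      have := window hδ hX hQ hC hab hγ ht k₀ hk
      rw [← hK₁] at this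
      linarith
    · push_neg at hb
      set w := γ t with hw
      set v₁ := γ (t + Λ) with hv₁
      -- B-config via induction
      have htΛb : t + Λ ≤ b := le_of_lt hb
      have hBmem : t + Λ ∈ Icc t b := ⟨by linarith, htΛb⟩
      have hBsub : Icc t b ⊆ Icc a b := Icc_subset_Icc ht.1 (le_refl b)
      have hB := ih γ t b (le_trans (by linarith) htΛb) (qg_mono hγ hBsub)
        (t + Λ) hBmem (by linarith)
        (by push_cast at h2 ⊢; linarith)
      -- window on [a, t+Λ]
      have hWsub : Icc a (t + Λ) ⊆ Icc a b := Icc_subset_Icc (le_refl a) htΛb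
      have hWmem : t ∈ Icc a (t + Λ) := ⟨ht.1, by linarith⟩
      have hWk : Q * (t + Λ - a) ≤ (C+1) * 2 ^ k₀ := by
        have : t + Λ - a ≤ 2*Λ := by linarith
        nlinarith
      have hW := window hδ hX hQ hC (le_trans ht.1 (by linarith : t ≤ t + Λ))
        (qg_mono hγ hWsub) hWmem k₀ hWk
      rw [← hK₁] at hW
      -- distance from v₁ to w
      have hdv : 2*K₁ + 5*δ + C + 1 - C ≤ dist v₁ w := by
        have hq := (hγ (t+Λ) (hBsub hBmem) t ht).1
        have habs : |t + Λ - t| = Λ := by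
          rw [show t + Λ - t = Λ by ring, abs_of_pos hΛ0]
        rw [habs, hQΛ] at hq
        linarith
      -- gp w (γ b) v₁ is large
      have hgb : K₁ + 3*δ + 1 ≤ gp w (γ b) v₁ := by
        have hadd := gp_add w v₁ (γ b)
        have hBk : gp v₁ (γ b) w ≤ K₁ + 2*δ := by
          rw [gp_comm]; exact hB
        linarith
      -- hyperbolicity
      have hhyp := hX w (γ a) v₁ (γ b)
      by_contra hcon
      push_neg at hcon
      have hmin : K₁ + δ < min (gp w (γ a) (γ b)) (gp w (γ b) v₁) :=
        lt_min (by linarith) (by linarith)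
      linarith

lemma morse {δ : ℝ} (hδ : 0 ≤ δ) (hX : IsGromovHyperbolicWith X δ)
    (Q C : ℝ) (hQ : 1 ≤ Q) (hC : 0 ≤ C) :
    ∃ K : ℝ, 0 ≤ K ∧ ∀ (γ : ℝ → X) (a b : ℝ), a ≤ b → IsQuasiGeodesicOn Q C γ a b →
      ∀ t ∈ Icc a b, gp (γ t) (γ a) (γ b) ≤ K := by
  have hQ0 : (0:ℝ) < Q := lt_of_lt_of_le one_pos hQ
  -- choose k₀
  set E : ℝ := (2*C+1) + C + Q^2 * ((2*C+1) + 2*δ + C/2) with hE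
  obtain ⟨k₀, hk₀⟩ := exists_nat_pow_ge (2*Q^2 * (2*E + 5*δ + C + 1)) (4*Q^4*δ)
  set K₁ : ℝ := (2*C+1) + C + Q^2 * ((2*C+1) + δ*k₀ + 2*δ + C/2) with hK₁
  set Λ : ℝ := Q * (2*K₁ + 5*δ + C + 1) with hΛ
  have hδk : (0:ℝ) ≤ δ * k₀ := mul_nonneg hδ (Nat.cast_nonneg k₀)
  have hK₁0 : 0 ≤ K₁ := by
    have hQ2 : (0:ℝ) ≤ Q^2 := sq_nonneg Q
    have hf : (0:ℝ) ≤ (2*C+1) + δ*k₀ + 2*δ + C/2 := by linarith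
    have := mul_nonneg hQ2 hf
    rw [hK₁]; linarith
  have hΛ0 : 0 < Λ := by rw [hΛ]; apply mul_pos hQ0; linarith
  have hkey : Q * (2*Λ) ≤ (C+1) * 2 ^ k₀ := by
    have he : Q * (2*Λ) = 2*Q^2 * (2*E + 5*δ + C + 1) + 4*Q^4*δ * k₀ := by
      rw [hΛ, hK₁, hE]; ring
    have h2 : (2:ℝ)^k₀ ≤ (C+1) * 2^k₀ := by
      have : (0:ℝ) < 2^k₀ := by positivity
      nlinarith
    linarith
  have hQΛ : Q⁻¹ * Λ = 2*K₁ + 5*δ + C + 1 := by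
    rw [hΛ, ← mul_assoc, inv_mul_cancel₀ (ne_of_gt hQ0), one_mul]
  have hmarch := marchR hδ hX hQ hC k₀ K₁ Λ hK₁ hΛ hkey
  refine ⟨K₁ + 2*δ, by linarith, ?_⟩
  intro γ a b hab hγ t ht
  by_cases h1 : t - a ≤ Λ
  · obtain ⟨N, hN⟩ := exists_nat_ge ((b - t)/Λ)
    have : b - t ≤ N * Λ := by
      rw [div_le_iff₀ hΛ0] at hN; linarith
    exact hmarch N γ a b hab hγ t ht h1 this
  by_cases h2 : b - t ≤ Λ
  · -- reverse
    obtain ⟨N, hN⟩ := exists_nat_ge ((t - a)/Λ)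
    have hta : t - a ≤ N * Λ := by
      rw [div_le_iff₀ hΛ0] at hN; linarith
    have htrev : a + b - t ∈ Icc a b := ⟨by linarith [ht.2], by linarith [ht.1]⟩
    have h := hmarch N (fun s => γ (a + b - s)) a b hab (qg_rev hγ)
      (a + b - t) htrev (by linarith) (by linarith)
    rw [show a + b - (a + b - t) = t by ring, show a + b - a = b by ring,
      show a + b - b = a by ring] at h
    rw [gp_comm] at h
    exact h
  · push_neg at h1 h2
    set w := γ t with hw
    set u₁ := γ (t - Λ) with hu₁
    set v₁ := γ (t + Λ) with hv₁
    have hau : a ≤ t - Λ := by linarith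
    have hvb : t + Λ ≤ b := by linarith
    -- A-side: reversed march on [a, t]
    have hAsub : Icc a t ⊆ Icc a b := Icc_subset_Icc (le_refl a) ht.2
    obtain ⟨N, hN⟩ := exists_nat_ge ((t - a - Λ)/Λ)
    have hNa : t - (a + Λ) ≤ N * Λ := by
      rw [div_le_iff₀ hΛ0] at hN; linarith
    have hA := hmarch N (fun s => γ (a + t - s)) a t ht.1
      (qg_rev (qg_mono hγ hAsub)) (a + Λ) ⟨by linarith, by linarith⟩
      (by linarith) hNa
    rw [show a + t - (a + Λ) = t - Λ by ring, show a + t - a = t by ring,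
      show a + t - t = a by ring] at hA
    have hAK : gp u₁ (γ a) w ≤ K₁ + 2*δ := by rw [gp_comm]; exact hA
    -- B-side: march on [t, b]
    have hBsub : Icc t b ⊆ Icc a b := Icc_subset_Icc ht.1 (le_refl b)
    obtain ⟨M, hM⟩ := exists_nat_ge ((b - t - Λ)/Λ)
    have hMb : b - (t + Λ) ≤ M * Λ := by
      rw [div_le_iff₀ hΛ0] at hM; linarith
    have hB := hmarch M γ t b (by linarith) (qg_mono hγ hBsub)
      (t + Λ) ⟨by linarith, hvb⟩ (by linarith) hMb
    -- window on [t-Λ, t+Λ]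
    have hWsub : Icc (t-Λ) (t+Λ) ⊆ Icc a b := Icc_subset_Icc hau hvb
    have hW := window hδ hX hQ hC (by linarith : t - Λ ≤ t + Λ)
      (qg_mono hγ hWsub) (⟨by linarith, by linarith⟩ : t ∈ Icc (t-Λ) (t+Λ)) k₀
      (by rw [show t + Λ - (t - Λ) = 2*Λ by ring]; exact hkey)
    rw [← hK₁] at hW
    -- distances
    have hdu : 2*K₁ + 5*δ + 1 ≤ dist u₁ w := by
      have hq := (hγ (t-Λ) (hWsub ⟨by linarith, by linarith⟩) t ht).1
      have habs : |t - Λ - t| = Λ := by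
        rw [show t - Λ - t = -Λ by ring, abs_neg, abs_of_pos hΛ0]
      rw [habs, hQΛ] at hq
      linarith
    have hdv : 2*K₁ + 5*δ + 1 ≤ dist v₁ w := by
      have hq := (hγ (t+Λ) (hWsub ⟨by linarith, by linarith⟩) t ht).1
      have habs : |t + Λ - t| = Λ := by
        rw [show t + Λ - t = Λ by ring, abs_of_pos hΛ0]
      rw [habs, hQΛ] at hq
      linarith
    -- large products
    have hga : K₁ + 3*δ + 1 ≤ gp w u₁ (γ a) := by
      have hadd := gp_add w u₁ (γ a)
      have : gp w (γ a) u₁ = gp w u₁ (γ a) := gp_comm _ _ _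
      linarith
    have hgb : K₁ + 3*δ + 1 ≤ gp w (γ b) v₁ := by
      have hadd := gp_add w v₁ (γ b)
      have hBk : gp v₁ (γ b) w ≤ K₁ + 2*δ := by rw [gp_comm]; exact hB
      linarith
    -- chain of hyperbolicity
    by_contra hcon
    push_neg at hcon
    have hh1 := hX w (γ a) v₁ (γ b)
    have hm1 : K₁ + 2*δ < min (gp w (γ a) (γ b)) (gp w (γ b) v₁) :=
      lt_min (by linarith) (by linarith)
    have hg3 : K₁ + δ < gp w (γ a) v₁ := by linarith
    have hh2 := hX w u₁ v₁ (γ a)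
    have hm2 : K₁ + δ < min (gp w u₁ (γ a)) (gp w (γ a) v₁) :=
      lt_min (by linarith) hg3
    linarith


/-- **Weak convexity of shadows** (Proposition `cor conv shadows` of the paper). -/
theorem shadows_weakly_convex (δ : ℝ) (hδ : 0 ≤ δ)
    (hX : IsGromovHyperbolicWith X δ) (Q C : ℝ) (hQ : 1 ≤ Q) (hC : 0 ≤ C) :
    ∃ D : ℝ,
      (∀ (o x : X) (R : ℝ) (γ : ℝ → X) (a b : ℝ), a ≤ b →
        IsQuasiGeodesicOn Q C γ a b →
        γ a ∈ shadow o x R → γ b ∈ shadow o x R →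
        ∀ t ∈ Icc a b, γ t ∈ shadow o x (R + D)) ∧
      (∀ (o x : X) (R : ℝ) (γ : ℝ → X) (a b : ℝ), a ≤ b →
        IsQuasiGeodesicOn Q C γ a b →
        γ a ∉ shadow o x R → γ b ∉ shadow o x R →
        ∀ t ∈ Icc a b, γ t ∉ shadow o x (R - D)) := by
  obtain ⟨K, hK0, hK⟩ := morse hδ hX Q C hQ hC
  refine ⟨2*K + 3*δ, ?_, ?_⟩
  · intro o x R γ a b hab hγ hya hyb t ht
    simp only [shadow, mem_setOf_eq] at hya hyb ⊢
    set w := γ t with hw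
    have hKt : gp w (γ a) (γ b) ≤ K := hK γ a b hab hγ t ht
    by_cases hcase : gp x w o ≤ R + δ
    · linarith
    push_neg at hcase
    have hA : gp x (γ a) w ≤ R + δ := by
      by_contra hA'
      push_neg at hA'
      have hm := lt_min hA' hcase
      have hh := hX x (γ a) o w
      linarith
    have hB : gp x (γ b) w ≤ R + δ := by
      by_contra hB'
      push_neg at hB'
      have hm := lt_min hB' hcase
      have hh := hX x (γ b) o w
      linarith
    have hadda := gp_add w x (γ a)
    have haddb := gp_add w x (γ b)
    have hcomm : gp w x (γ b) = gp w (γ b) x := gp_comm _ _ _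
    have hh := hX w (γ a) (γ b) x
    have hm : dist x w - (R + δ) ≤ min (gp w (γ a) x) (gp w x (γ b)) :=
      le_min (by linarith) (by linarith)
    have hdw : dist x w ≤ K + R + 2*δ := by linarith
    have : gp x w o ≤ dist w x := gp_le_left x w o
    rw [dist_comm] at this
    linarith
  · intro o x R γ a b hab hγ hya hyb t ht
    simp only [shadow, mem_setOf_eq] at hya hyb ⊢
    push_neg at hya hyb
    set w := γ t with hw
    have hKt : gp w (γ a) (γ b) ≤ K := hK γ a b hab hγ t ht
    intro hc
    have hG : R - δ < gp x (γ a) (γ b) := by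
      have hh := hX x (γ a) (γ b) o
      have hcomm : gp x o (γ b) = gp x (γ b) o := gp_comm _ _ _
      have hm : R < min (gp x (γ a) o) (gp x o (γ b)) :=
        lt_min hya (by rw [hcomm]; exact hyb)
      linarith
    have hbase := gp_base x w (γ a) (γ b)
    have hdw : R - δ - K < dist x w := by linarith
    have hh2 := hX w (γ a) (γ b) x
    rcases le_total (gp w (γ a) x) (gp w x (γ b)) with hle | hle
    · have hsmall : gp w (γ a) x ≤ K + δ := by
        rw [min_eq_left hle] at hh2
        linarith
      have hadd := gp_add w x (γ a)
      have hlarge : R - 2*K - 2*δ < gp x (γ a) w := by linarith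
      have hh3 := hX x w o (γ a)
      have hcomm : gp x w (γ a) = gp x (γ a) w := gp_comm _ _ _
      have hm : R - 2*K - 2*δ < min (gp x w (γ a)) (gp x (γ a) o) :=
        lt_min (by rw [hcomm]; exact hlarge) (by linarith)
      linarith
    · have hsmall : gp w x (γ b) ≤ K + δ := by
        rw [min_eq_right hle] at hh2
        linarith
      have hcomm0 : gp w x (γ b) = gp w (γ b) x := gp_comm _ _ _
      have hadd := gp_add w x (γ b)
      have hlarge : R - 2*K - 2*δ < gp x (γ b) w := by linarith
      have hh3 := hX x w o (γ b)
      have hcomm : gp x w (γ b) = gp x (γ b) w := gp_comm _ _ _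
      have hm : R - 2*K - 2*δ < min (gp x w (γ b)) (gp x (γ b) o) :=
        lt_min (by rw [hcomm]; exact hlarge) (by linarith)
      linarith

end Stmt8
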